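/- A connected quiver Q is nicely-graded if and only if there exists a function u : Q_0 → Z such that u(j) = u(i) + 1 whenever there is an arrow α : i → j in Q. -/

import Mathlib

/-! ### Walks in a quiver and the grade function -/

/-- A walk in a quiver from `i` to `j`: a finite sequence of arrows, each traversed
either forwards (`fwd`) or backwards (`bwd`).  This encodes the alternating sequences
of paths `(p_0, …, p_r)` of the paper: the forward steps make up the paths with even
index and the backward steps the paths with odd index. -/
inductive QWalk (V : Type) [Quiver.{0} V] : V → V → Type
  | nil (i : V) : QWalk V i i
  | fwd {i j k : V} (α : i ⟶ j) (w : QWalk V j k) : QWalk V i k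
  | bwd {i j k : V} (α : j ⟶ i) (w : QWalk V j k) : QWalk V i k

namespace QWalk

variable {V : Type} [Quiver.{0} V]

/-- The grade `u_{i,w}(j)` of a walk: the number of forwardly traversed arrows minus
the number of backwardly traversed arrows, i.e. `Σ_{h} (-1)^h l(p_h)`. -/
def grade : ∀ {i j : V}, QWalk V i j → ℤ
  | _, _, .nil _ => 0
  | _, _, .fwd _ w => w.grade + 1
  | _, _, .bwd _ w => w.grade - 1

/-- The vertex `v` lies on the walk `w`. -/
def Mem : ∀ {i j : V}, QWalk V i j → V → Prop
  | _, _, .nil i, v => v = i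
  | _, _, @QWalk.fwd _ _ i _ _ _ w, v => v = i ∨ w.Mem v
  | _, _, @QWalk.bwd _ _ i _ _ _ w, v => v = i ∨ w.Mem v

/-- Concatenation of walks. -/
def append : ∀ {i j l : V}, QWalk V i j → QWalk V j l → QWalk V i l
  | _, _, _, .nil _, w' => w'
  | _, _, _, .fwd α w, w' => .fwd α (w.append w')
  | _, _, _, .bwd α w, w' => .bwd α (w.append w')

/-- All vertices of the walk lie in the set `S`, i.e. the walk is a walk of the full
subquiver on `S`. -/
def InSet {i j : V} (S : Set V) (w : QWalk V i j) : Prop := ∀ v : V, w.Mem v → v ∈ S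

/-- `v` is a sink of the walk `w`: the walk passes through `v`, arriving along an arrow
pointing towards `v` and leaving along an arrow pointing towards `v`
(this is a vertex `t(p_{2h}) = t(p_{2h+1})` of a walk `(p_0, …, p_r)` in the paper). -/
def IsSink {i j : V} (w : QWalk V i j) (v : V) : Prop :=
  ∃ (a b : V) (α : a ⟶ v) (β : b ⟶ v) (w₁ : QWalk V i a) (w₂ : QWalk V b j),
    w = w₁.append (.fwd α (.bwd β w₂))

/-- `v` is a source of the walk `w`: the walk passes through `v`, arriving along an arrow
pointing away from `v` and leaving along an arrow pointing away from `v`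
(this is a vertex `s(p_{2h+1}) = s(p_{2h+2})` of a walk in the paper). -/
def IsSource {i j : V} (w : QWalk V i j) (v : V) : Prop :=
  ∃ (a b : V) (α : v ⟶ a) (β : v ⟶ b) (w₁ : QWalk V i a) (w₂ : QWalk V b j),
    w = w₁.append (.bwd α (.fwd β w₂))

end QWalk

/-- A quiver is *nicely-graded* if every cyclic walk has grade `0`,
i.e. `u_{i,w}(i) = 0` for every vertex `i` and every cyclic walk `w` from `i` to `i`. -/
def NicelyGraded (V : Type) [Quiver.{0} V] : Prop :=
  ∀ (i : V) (w : QWalk V i i), w.grade = 0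

/-- A quiver is connected if any two vertices are joined by a walk. -/
def WalkConnected (V : Type) [Quiver.{0} V] : Prop :=
  ∀ a b : V, Nonempty (QWalk V a b)


namespace QWalk

variable {V : Type} [Quiver.{0} V]

theorem grade_append : ∀ {i j l : V} (w : QWalk V i j) (w' : QWalk V j l),
    (w.append w').grade = w.grade + w'.grade
  | _, _, _, .nil _, w' => by simp [append, grade]
  | _, _, _, .fwd α w, w' => by simp [append, grade, grade_append w w']; ring
  | _, _, _, .bwd α w, w' => by simp [append, grade, grade_append w w']; ring

/-- Reversal of a walk. -/
def reverse : ∀ {i j : V}, QWalk V i j → QWalk V j i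
  | _, _, .nil i => .nil i
  | _, _, .fwd α w => w.reverse.append (.bwd α (.nil _))
  | _, _, .bwd α w => w.reverse.append (.fwd α (.nil _))

theorem grade_reverse : ∀ {i j : V} (w : QWalk V i j), w.reverse.grade = -w.grade
  | _, _, .nil _ => rfl
  | _, _, .fwd α w => by
      simp [reverse, grade_append, grade, grade_reverse w]; ring
  | _, _, .bwd α w => by
      simp [reverse, grade_append, grade, grade_reverse w]; ring

end QWalk

/-- Proposition `nicegrd`.
A connected quiver `Q` is nicely-graded if and only if there exists a function
`u : Q₀ → ℤ` such that `u j = u i + 1` whenever there is an arrow `α : i → j` in `Q`. -/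
theorem nicelyGraded_iff_exists_grading {V : Type} [Quiver.{0} V]
    (hconn : WalkConnected V) :
    NicelyGraded V ↔ ∃ u : V → ℤ, ∀ i j : V, (i ⟶ j) → u j = u i + 1 := by
  constructor
  · intro hng
    by_cases hV : Nonempty V
    · obtain ⟨v₀⟩ := hV
      have key : ∀ (j : V) (w w' : QWalk V v₀ j), w.grade = w'.grade := by
        intro j w w'
        have h := hng v₀ (w.append w'.reverse)
        rw [QWalk.grade_append, QWalk.grade_reverse] at h
        omega
      refine ⟨fun j => (Classical.choice (hconn v₀ j)).grade, fun i j α => ?_⟩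
      dsimp only
      have := key j (Classical.choice (hconn v₀ j))
        ((Classical.choice (hconn v₀ i)).append (.fwd α (.nil j)))
      rw [QWalk.grade_append] at this
      simp [QWalk.grade] at this
      omega
    · exact ⟨fun _ => 0, fun i => absurd ⟨i⟩ hV⟩
  · rintro ⟨u, hu⟩ i w
    suffices h : ∀ {a b : V} (w : QWalk V a b), w.grade = u b - u a by
      have := h w; omega
    intro a b w
    induction w with
    | nil => simp [QWalk.grade]
    | fwd α w ih => have := hu _ _ α; simp [QWalk.grade, ih]; omega
    | bwd α w ih => have := hu _ _ α; simp [QWalk.grade, ih]; omega
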